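/- Let K ⊆ L be two finite Galois extensions of ℚ. Then the natural map ε : Cl(K) → Cl(L) sending the class of an ideal I to the class of I𝒪_L maps the Pólya group of K into the Pólya group of L. -/
import Mathlib


open NumberField
open scoped nonZeroDivisors

/-- The Pólya group of a number field `K`: the subgroup of the class group generated
by the classes of ambiguous (Galois-invariant) nonzero ideals. -/
noncomputable def PolyaGroup (K : Type*) [Field K] [NumberField K] : Subgroup (ClassGroup (𝓞 K)) :=
  Subgroup.closure {c | ∃ I : (Ideal (𝓞 K))⁰,
    (∀ σ : K ≃ₐ[ℚ] K, Ideal.map (galRestrict ℤ ℚ K (𝓞 K) σ) (I : Ideal (𝓞 K)) = I) ∧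
    ClassGroup.mk0 I = c}

section Aux

variable (K L : Type*) [Field K] [NumberField K] [Field L] [NumberField L]
    [Algebra K L] [IsScalarTower ℚ K L] [IsGalois ℚ K] [IsGalois ℚ L]

lemma polya_aux_inj : Function.Injective (algebraMap (𝓞 K) (𝓞 L)) := by
  have : Function.Injective (algebraMap (𝓞 K) L) := by
    rw [IsScalarTower.algebraMap_eq (𝓞 K) K L]
    exact (algebraMap K L).injective.comp RingOfIntegers.coe_injective
  rw [IsScalarTower.algebraMap_eq (𝓞 K) (𝓞 L) L, RingHom.coe_comp] at this
  exact Function.Injective.of_comp this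

lemma polya_aux_comm (x : 𝓞 K) (τ : L ≃ₐ[ℚ] L) :
    galRestrict ℤ ℚ L (𝓞 L) τ (algebraMap (𝓞 K) (𝓞 L) x) =
      algebraMap (𝓞 K) (𝓞 L) (galRestrict ℤ ℚ K (𝓞 K) (τ.restrictNormal K) x) := by
  apply RingOfIntegers.coe_injective (K := L)
  rw [algebraMap_galRestrict_apply]
  have h1 : (algebraMap (𝓞 L) L) (algebraMap (𝓞 K) (𝓞 L) x) =
      algebraMap K L (algebraMap (𝓞 K) K x) := by
    rw [← IsScalarTower.algebraMap_apply, IsScalarTower.algebraMap_apply (𝓞 K) K L]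
  have h2 : (algebraMap (𝓞 L) L)
        (algebraMap (𝓞 K) (𝓞 L) (galRestrict ℤ ℚ K (𝓞 K) (τ.restrictNormal K) x)) =
      algebraMap K L (algebraMap (𝓞 K) K (galRestrict ℤ ℚ K (𝓞 K) (τ.restrictNormal K) x)) := by
    rw [← IsScalarTower.algebraMap_apply, IsScalarTower.algebraMap_apply (𝓞 K) K L]
  rw [h1, h2, algebraMap_galRestrict_apply, AlgEquiv.restrictNormal_commutes]

lemma polya_aux_mem (I : (Ideal (𝓞 K))⁰) :
    Ideal.map (algebraMap (𝓞 K) (𝓞 L)) (I : Ideal (𝓞 K)) ∈ (Ideal (𝓞 L))⁰ := by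
  rw [mem_nonZeroDivisors_iff_ne_zero]
  intro h
  have hI : (I : Ideal (𝓞 K)) ≠ 0 := nonZeroDivisors.coe_ne_zero I
  exact hI ((Ideal.map_eq_bot_iff_of_injective (polya_aux_inj K L)).mp h)

/-- Well-definedness of the extension map on class groups. -/
lemma polya_aux_congr {I I' : (Ideal (𝓞 K))⁰}
    (h : ClassGroup.mk0 I = ClassGroup.mk0 I')
    (J J' : (Ideal (𝓞 L))⁰)
    (hJ : (J : Ideal (𝓞 L)) = Ideal.map (algebraMap (𝓞 K) (𝓞 L)) (I : Ideal (𝓞 K)))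
    (hJ' : (J' : Ideal (𝓞 L)) = Ideal.map (algebraMap (𝓞 K) (𝓞 L)) (I' : Ideal (𝓞 K))) :
    ClassGroup.mk0 J = ClassGroup.mk0 J' := by
  rw [ClassGroup.mk0_eq_mk0_iff] at h ⊢
  obtain ⟨x, y, hx, hy, heq⟩ := h
  refine ⟨algebraMap (𝓞 K) (𝓞 L) x, algebraMap (𝓞 K) (𝓞 L) y, ?_, ?_, ?_⟩
  · simpa using fun hh => hx ((polya_aux_inj K L) (by simpa using hh))
  · simpa using fun hh => hy ((polya_aux_inj K L) (by simpa using hh))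
  · have := congrArg (Ideal.map (algebraMap (𝓞 K) (𝓞 L))) heq
    rwa [Ideal.map_mul, Ideal.map_mul, Ideal.map_span, Ideal.map_span,
      Set.image_singleton, Set.image_singleton, ← hJ, ← hJ'] at this

end Aux

theorem polyaGroup_extension_mem
    (K L : Type*) [Field K] [NumberField K] [Field L] [NumberField L]
    [Algebra K L] [IsScalarTower ℚ K L] [IsGalois ℚ K] [IsGalois ℚ L] :
    ∀ x ∈ PolyaGroup K, ∀ I : (Ideal (𝓞 K))⁰, ClassGroup.mk0 I = x →
      ∀ J : (Ideal (𝓞 L))⁰,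
        (J : Ideal (𝓞 L)) = Ideal.map (algebraMap (𝓞 K) (𝓞 L)) (I : Ideal (𝓞 K)) →
        ClassGroup.mk0 J ∈ PolyaGroup L := by
  intro x hx
  set f := algebraMap (𝓞 K) (𝓞 L) with hf
  refine Subgroup.closure_induction
    (p := fun x _ => ∀ I : (Ideal (𝓞 K))⁰, ClassGroup.mk0 I = x →
      ∀ J : (Ideal (𝓞 L))⁰, (J : Ideal (𝓞 L)) = Ideal.map f (I : Ideal (𝓞 K)) →
        ClassGroup.mk0 J ∈ PolyaGroup L)
    ?_ ?_ ?_ ?_ hx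
  · -- generators
    rintro c ⟨I₀, hamb, hc⟩ I hI J hJ
    set J₀ : (Ideal (𝓞 L))⁰ := ⟨Ideal.map f (I₀ : Ideal (𝓞 K)), polya_aux_mem K L I₀⟩ with hJ₀
    have : ClassGroup.mk0 J = ClassGroup.mk0 J₀ :=
      polya_aux_congr K L (by rw [hI, hc]) J J₀ hJ rfl
    rw [this]
    apply Subgroup.subset_closure
    refine ⟨J₀, fun τ => ?_, rfl⟩
    have hcomp : (RingHomClass.toRingHom (galRestrict ℤ ℚ L (𝓞 L) τ)).comp f =
        f.comp (RingHomClass.toRingHom (galRestrict ℤ ℚ K (𝓞 K) (τ.restrictNormal K))) :=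
      RingHom.ext fun x => polya_aux_comm K L x τ
    show Ideal.map _ (Ideal.map f (I₀ : Ideal (𝓞 K))) = Ideal.map f (I₀ : Ideal (𝓞 K))
    calc Ideal.map (galRestrict ℤ ℚ L (𝓞 L) τ) (Ideal.map f (I₀ : Ideal (𝓞 K)))
        = Ideal.map ((RingHomClass.toRingHom (galRestrict ℤ ℚ L (𝓞 L) τ)).comp f)
            (I₀ : Ideal (𝓞 K)) := Ideal.map_map f _
      _ = Ideal.map (f.comp
            (RingHomClass.toRingHom (galRestrict ℤ ℚ K (𝓞 K) (τ.restrictNormal K))))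
            (I₀ : Ideal (𝓞 K)) := by rw [hcomp]
      _ = Ideal.map f (Ideal.map (galRestrict ℤ ℚ K (𝓞 K) (τ.restrictNormal K))
            (I₀ : Ideal (𝓞 K))) := (Ideal.map_map _ f).symm
      _ = Ideal.map f (I₀ : Ideal (𝓞 K)) := by rw [hamb (τ.restrictNormal K)]
  · -- one
    intro I hI J hJ
    have hprin : (I : Ideal (𝓞 K)).IsPrincipal := by
      rw [← ClassGroup.mk0_eq_one_iff I.2]
      exact hI
    obtain ⟨a, ha⟩ := hprin
    have : (J : Ideal (𝓞 L)) = Ideal.span {f a} := by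
      rw [hJ, ha, Ideal.submodule_span_eq, Ideal.map_span, Set.image_singleton]
    have : ClassGroup.mk0 J = 1 := by
      rw [show J = ⟨(J : Ideal (𝓞 L)), J.2⟩ from rfl]
      rw [ClassGroup.mk0_eq_one_iff]
      exact ⟨f a, this⟩
    rw [this]; exact one_mem _
  · -- mul
    rintro a b _ _ ha hb I hI J hJ
    obtain ⟨I₁, hI₁⟩ := ClassGroup.mk0_surjective (R := 𝓞 K) a
    obtain ⟨I₂, hI₂⟩ := ClassGroup.mk0_surjective (R := 𝓞 K) b
    set J₁ : (Ideal (𝓞 L))⁰ := ⟨Ideal.map f (I₁ : Ideal (𝓞 K)), polya_aux_mem K L I₁⟩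
    set J₂ : (Ideal (𝓞 L))⁰ := ⟨Ideal.map f (I₂ : Ideal (𝓞 K)), polya_aux_mem K L I₂⟩
    have h1 : ClassGroup.mk0 J₁ ∈ PolyaGroup L := ha I₁ hI₁ J₁ rfl
    have h2 : ClassGroup.mk0 J₂ ∈ PolyaGroup L := hb I₂ hI₂ J₂ rfl
    have hm : ClassGroup.mk0 I = ClassGroup.mk0 (I₁ * I₂) := by
      rw [MonoidHom.map_mul, hI₁, hI₂, hI]
    have hJJ : ClassGroup.mk0 J = ClassGroup.mk0 (J₁ * J₂) := by
      refine polya_aux_congr K L hm J (J₁ * J₂) hJ ?_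
      show ((J₁ : Ideal (𝓞 L)) * (J₂ : Ideal (𝓞 L)) : Ideal (𝓞 L)) = _
      rw [Submonoid.coe_mul, Ideal.map_mul]
    rw [hJJ, MonoidHom.map_mul]
    exact mul_mem h1 h2
  · -- inv
    rintro a _ ha I hI J hJ
    obtain ⟨I₁, hI₁⟩ := ClassGroup.mk0_surjective (R := 𝓞 K) a
    set J₁ : (Ideal (𝓞 L))⁰ := ⟨Ideal.map f (I₁ : Ideal (𝓞 K)), polya_aux_mem K L I₁⟩
    have h1 : ClassGroup.mk0 J₁ ∈ PolyaGroup L := ha I₁ hI₁ J₁ rfl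
    -- I * I₁ is principal
    have hone : ClassGroup.mk0 (I * I₁) = 1 := by
      rw [MonoidHom.map_mul, hI, hI₁, inv_mul_cancel]
    have hprin : ((I * I₁ : (Ideal (𝓞 K))⁰) : Ideal (𝓞 K)).IsPrincipal := by
      rw [← ClassGroup.mk0_eq_one_iff (I * I₁).2]
      exact hone
    obtain ⟨c, hc⟩ := hprin
    -- hence J * J₁ is principal
    have hJmul : ((J * J₁ : (Ideal (𝓞 L))⁰) : Ideal (𝓞 L)) = Ideal.span {f c} := by
      rw [Submonoid.coe_mul, hJ]
      show Ideal.map f (I : Ideal (𝓞 K)) * Ideal.map f (I₁ : Ideal (𝓞 K)) = _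
      rw [← Ideal.map_mul, ← Submonoid.coe_mul, hc, Ideal.submodule_span_eq,
        Ideal.map_span, Set.image_singleton]
    have honeL : ClassGroup.mk0 (J * J₁) = 1 := by
      rw [show J * J₁ = ⟨((J * J₁ : (Ideal (𝓞 L))⁰) : Ideal (𝓞 L)), (J * J₁).2⟩ from rfl]
      rw [ClassGroup.mk0_eq_one_iff]
      exact ⟨f c, hJmul⟩
    rw [MonoidHom.map_mul] at honeL
    rw [eq_inv_of_mul_eq_one_left honeL]
    exact inv_mem h1
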